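/- Dirac's condition holds in the measure algebra: if $|\sigma(f,g)| \le c\,\varsigma(f)\varsigma(g)$ and $\mu, \nu$ have finite first $\varsigma$-moments, then $\lim_{\hbar \to 0} \|\{\mu,\nu\}_\hbar - \{\mu,\nu\}_0\|_1 = 0$, where $\{\mu,\nu\}_\hbar := \frac{i}{\hbar}(\mu\star_\hbar\nu - \nu\star_\hbar\mu)$ for $\hbar \ne 0$ and $\{\mu,\nu\}_0(\Lambda) = \int\int \sigma(f,g)\mathbf{1}_\Lambda(f+g)\,d\mu(f)\,d\nu(g)$. -/

import Mathlib

open MeasureTheory Complex Filter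

/-- A finite complex Borel measure, represented by its variation measure
together with a density of modulus one (polar decomposition). -/
structure CMeasure (E : Type*) [MeasurableSpace E] where
  var : MeasureTheory.Measure E
  finite : MeasureTheory.IsFiniteMeasure var
  density : E → ℂ
  meas_density : Measurable density
  norm_density : ∀ f, ‖density f‖ = 1

namespace CMeasure

/-- The value `μ(Λ)` of the complex measure on a set `Λ`. -/
noncomputable def val {E : Type*} [MeasurableSpace E] (μ : CMeasure E) (Λ : Set E) : ℂ :=
  ∫ f in Λ, μ.density f ∂μ.var

/-- The integral `∫ a dμ` of a complex function against the complex measure. -/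
noncomputable def integral {E : Type*} [MeasurableSpace E] (μ : CMeasure E) (a : E → ℂ) : ℂ :=
  ∫ f, a f * μ.density f ∂μ.var

/-- The total variation norm `‖μ‖₁ = |μ|(E)`. -/
noncomputable def norm1 {E : Type*} [MeasurableSpace E] (μ : CMeasure E) : ℝ :=
  (μ.var Set.univ).toReal

end CMeasure

/-- The set of partial sums `∑ ‖φ(Λ_k)‖` over finite disjoint families of
measurable sets, whose supremum is the total variation norm of the set function `φ`. -/
def tvSet {E : Type*} [MeasurableSpace E] (φ : Set E → ℂ) : Set ℝ :=
  { r | ∃ (n : ℕ) (Λ : Fin n → Set E), (∀ i, MeasurableSet (Λ i)) ∧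
      Pairwise (Function.onFun Disjoint Λ) ∧ r = ∑ i, ‖φ (Λ i)‖ }

/-- The total variation norm of a complex set function. -/
noncomputable def tvNorm {E : Type*} [MeasurableSpace E] (φ : Set E → ℂ) : ℝ :=
  sSup (tvSet φ)

/-- Complex-valued indicator function of a set. -/
noncomputable def cind {E : Type*} (Λ : Set E) (h : E) : ℂ :=
  Set.indicator Λ (fun _ => (1 : ℂ)) h

/-- Twisted convolution `(μ ⋆_hb ν)(Λ) = ∫∫ e^{-(i/2)hbσ(f,g)} 1_Λ(f+g) dμ(f) dν(g)`,
as a set function. -/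
noncomputable def twistVal {E : Type*} [MeasurableSpace E] [Add E]
    (σ : E → E → ℝ) (hb : ℝ) (μ ν : CMeasure E) (Λ : Set E) : ℂ :=
  μ.integral fun f => ν.integral fun g =>
    Complex.exp (-(Complex.I / 2) * (hb : ℂ) * (σ f g : ℂ)) * cind Λ (f + g)

/-- Poisson bracket `{μ,ν}₀(Λ) = ∫∫ σ(f,g) 1_Λ(f+g) dμ(f) dν(g)`, as a set function. -/
noncomputable def pbVal {E : Type*} [MeasurableSpace E] [Add E]
    (σ : E → E → ℝ) (μ ν : CMeasure E) (Λ : Set E) : ℂ :=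
  μ.integral fun f => ν.integral fun g => ((σ f g : ℝ) : ℂ) * cind Λ (f + g)

noncomputable def kk (hb x : ℝ) : ℝ := 2 / hb * Real.sin (hb * x / 2) - x

lemma kk_abs_le (hb x : ℝ) : |kk hb x| ≤ 2 * |x| := by
  rcases eq_or_ne hb 0 with h | h
  · simp [kk, h, abs_neg]
    nlinarith [abs_nonneg x]
  · have h1 : |2 / hb * Real.sin (hb * x / 2)| ≤ |x| := by
      rw [abs_mul, abs_div]
      have := Real.abs_sin_le_abs (x := hb * x / 2)
      have hh : |hb| > 0 := abs_pos.2 h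
      rw [abs_div, abs_mul] at this
      calc |2| / |hb| * |Real.sin (hb * x / 2)| ≤ |2| / |hb| * (|hb| * |x| / |2|) := by
            apply mul_le_mul_of_nonneg_left _ (by positivity)
            simpa [abs_mul] using this
        _ = |x| := by field_simp
    calc |kk hb x| ≤ |2 / hb * Real.sin (hb * x / 2)| + |x| := abs_sub _ _
      _ ≤ 2 * |x| := by linarith

lemma kk_tendsto (x : ℝ) : Tendsto (fun hb => kk hb x) (nhdsWithin 0 {(0:ℝ)}ᶜ) (nhds 0) := by
  have hF : HasDerivAt (fun t : ℝ => 2 * Real.sin (t * x / 2)) x 0 := by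
    have h1 : HasDerivAt (fun t : ℝ => t * x / 2) (x / 2) 0 := by
      simpa using ((hasDerivAt_id 0).mul_const x).div_const 2
    have h2 := (Real.hasDerivAt_sin ((0:ℝ) * x / 2)).comp 0 h1
    have h3 := h2.const_mul 2
    have he : (2 : ℝ) * (Real.cos ((0:ℝ) * x / 2) * (x / 2)) = x := by simp; ring
    rw [he] at h3
    exact h3
  have := hasDerivAt_iff_tendsto_slope.mp hF
  have h4 : Tendsto (fun hb : ℝ => 2 / hb * Real.sin (hb * x / 2)) (nhdsWithin 0 {(0:ℝ)}ᶜ)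
      (nhds x) := by
    refine this.congr' ?_
    filter_upwards [self_mem_nhdsWithin] with t ht
    simp only [Set.mem_compl_iff, Set.mem_singleton_iff] at ht
    rw [slope_def_field]
    field_simp
    simp only [mul_zero, zero_div, Real.sin_zero, sub_zero]
    ring
  have h5 := h4.sub_const x
  simpa [kk] using h5

lemma pt_id (hb : ℝ) (hhb : hb ≠ 0) (x : ℝ) :
    (Complex.I / (hb:ℂ)) * (Complex.exp (-(Complex.I / 2) * (hb:ℂ) * (x:ℂ))
      - Complex.exp (-(Complex.I / 2) * (hb:ℂ) * ((-x : ℝ) : ℂ))) - (x:ℂ)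
    = ((kk hb x : ℝ) : ℂ) := by
  have h1 : (-(Complex.I / 2) * (hb:ℂ) * (x:ℂ)) = ((-(hb * x / 2) : ℝ) : ℂ) * Complex.I := by
    push_cast; ring
  have h2 : (-(Complex.I / 2) * (hb:ℂ) * ((-x : ℝ):ℂ)) = ((hb * x / 2 : ℝ) : ℂ) * Complex.I := by
    push_cast; ring
  rw [h1, h2, Complex.exp_mul_I, Complex.exp_mul_I]
  rw [← Complex.ofReal_cos, ← Complex.ofReal_sin, ← Complex.ofReal_cos, ← Complex.ofReal_sin]
  rw [Real.cos_neg, Real.sin_neg]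
  have hhb' : (hb : ℂ) ≠ 0 := by exact_mod_cast hhb
  simp only [kk]
  push_cast
  field_simp
  ring_nf
  simp [Complex.I_sq]
  ring

lemma norm_cind {E : Type*} (Λ : Set E) (x : E) :
    ‖cind Λ x‖ = Set.indicator Λ (fun _ => (1:ℝ)) x := by
  by_cases h : x ∈ Λ <;> simp [cind, h]

lemma norm_cind_le {E : Type*} (Λ : Set E) (x : E) : ‖cind Λ x‖ ≤ 1 := by
  rw [norm_cind]
  by_cases h : x ∈ Λ <;> simp [h]

lemma norm_exp_I (hb r : ℝ) : ‖Complex.exp (-(Complex.I / 2) * (hb:ℂ) * (r:ℂ))‖ = 1 := by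
  have h : (-(Complex.I / 2) * (hb:ℂ) * (r:ℂ)) = ((-(hb * r / 2) : ℝ) : ℂ) * Complex.I := by
    push_cast; ring
  rw [h]
  exact Complex.norm_exp_ofReal_mul_I _

lemma sum_ind_le {E : Type*} {n : ℕ} (Λ : Fin n → Set E)
    (h : Pairwise (Function.onFun Disjoint Λ)) (x : E) :
    ∑ i, Set.indicator (Λ i) (fun _ => (1:ℝ)) x ≤ 1 := by
  by_cases hx : ∃ j, x ∈ Λ j
  · obtain ⟨j, hj⟩ := hx
    have heach : ∀ i, Set.indicator (Λ i) (fun _ => (1:ℝ)) x = if i = j then 1 else 0 := by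
      intro i
      by_cases h' : i = j
      · subst h'; simp [hj]
      · have hxi : x ∉ Λ i := fun hxi => (Set.disjoint_left.mp (h h')) hxi hj
        simp [hxi, h']
    rw [Finset.sum_congr rfl (fun i _ => heach i)]
    simp
  · push_neg at hx
    simp [Set.indicator_of_notMem, hx]

/-- Dirac's condition in the measure algebra:
`lim_{ħ→0} ‖{μ,ν}_ħ - {μ,ν}₀‖₁ = 0`, where
`{μ,ν}_ħ = (i/ħ)(μ⋆_ħν - ν⋆_ħμ)` for `ħ ≠ 0`. -/
theorem dirac_condition_measures
    {E : Type*} [AddCommGroup E] [Module ℝ E] [MeasurableSpace E] [MeasurableAdd₂ E]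
    (σ : E →ₗ[ℝ] E →ₗ[ℝ] ℝ) (hσ_anti : ∀ f g : E, σ f g = - σ g f)
    (hσ_meas : Measurable fun p : E × E => σ p.1 p.2)
    (ς : Seminorm ℝ E) (hς_meas : Measurable fun f : E => (ς f : ℝ))
    (c : ℝ) (hc : 0 < c) (hdom : ∀ f g : E, |σ f g| ≤ c * ς f * ς g)
    (μ ν : CMeasure E)
    (hμ : MeasureTheory.Integrable (fun f : E => (ς f : ℝ)) μ.var)
    (hν : MeasureTheory.Integrable (fun g : E => (ς g : ℝ)) ν.var) :
    Filter.Tendsto (fun hb : ℝ =>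
        tvNorm (fun Λ : Set E =>
          (Complex.I / (hb : ℂ)) * (twistVal (fun a b => σ a b) hb μ ν Λ
              - twistVal (fun a b => σ a b) hb ν μ Λ)
            - pbVal (fun a b => σ a b) μ ν Λ))
      (nhdsWithin 0 {(0 : ℝ)}ᶜ) (nhds 0) := by
  haveI := μ.finite
  haveI := ν.finite
  set ρ : Measure (E × E) := μ.var.prod ν.var with hρ
  have madd : Measurable fun p : E × E => p.1 + p.2 := measurable_add
  have mcind : ∀ Λ : Set E, MeasurableSet Λ →
      Measurable fun p : E × E => cind Λ (p.1 + p.2) := fun Λ hΛ =>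
    (measurable_const.indicator hΛ).comp madd
  have mind : ∀ Λ : Set E, MeasurableSet Λ →
      Measurable fun p : E × E => Set.indicator Λ (fun _ => (1:ℝ)) (p.1 + p.2) := fun Λ hΛ =>
    (measurable_const.indicator hΛ).comp madd
  have bnd_int : Integrable (fun p : E × E => 2 * c * (ς p.1 * ς p.2)) ρ :=
    (hμ.mul_prod hν).const_mul (2 * c)
  have kk_m : ∀ hb : ℝ, Measurable fun p : E × E => kk hb (σ p.1 p.2) := by
    intro hb
    have hcont : Continuous (kk hb) := by unfold kk; fun_prop
    exact hcont.measurable.comp hσ_meas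
  have kk_bd : ∀ (hb : ℝ) (p : E × E), |kk hb (σ p.1 p.2)| ≤ 2 * c * (ς p.1 * ς p.2) := by
    intro hb p
    refine (kk_abs_le hb _).trans ?_
    have h1 := hdom p.1 p.2
    have h2 := abs_nonneg (σ p.1 p.2)
    nlinarith
  have kk_int : ∀ hb : ℝ, Integrable (fun p : E × E => |kk hb (σ p.1 p.2)|) ρ := by
    intro hb
    refine bnd_int.mono' ((kk_m hb).abs.aestronglyMeasurable) ?_
    filter_upwards with p
    simpa [_root_.abs_abs] using kk_bd hb p
  -- the key representation of the set function as a single integral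
  have keyA : ∀ (hb : ℝ), hb ≠ 0 → ∀ Λ : Set E, MeasurableSet Λ →
      (Complex.I / (hb:ℂ)) * (twistVal (fun a b => σ a b) hb μ ν Λ
        - twistVal (fun a b => σ a b) hb ν μ Λ) - pbVal (fun a b => σ a b) μ ν Λ
      = ∫ p, ((kk hb (σ p.1 p.2) : ℝ) : ℂ) * cind Λ (p.1 + p.2)
            * ν.density p.2 * μ.density p.1 ∂ρ := by
    intro hb hhb Λ hΛ
    set G : E × E → ℂ := fun p =>
      Complex.exp (-(Complex.I/2) * (hb:ℂ) * ((σ p.1 p.2 : ℝ):ℂ)) * cind Λ (p.1 + p.2)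
        * ν.density p.2 * μ.density p.1 with hG
    set H : E × E → ℂ := fun p =>
      Complex.exp (-(Complex.I/2) * (hb:ℂ) * ((σ p.2 p.1 : ℝ):ℂ)) * cind Λ (p.2 + p.1)
        * μ.density p.1 * ν.density p.2 with hH
    set P : E × E → ℂ := fun p =>
      ((σ p.1 p.2 : ℝ) : ℂ) * cind Λ (p.1 + p.2) * ν.density p.2 * μ.density p.1 with hP
    have me1 : Measurable fun p : E × E =>
        Complex.exp (-(Complex.I/2) * (hb:ℂ) * ((σ p.1 p.2 : ℝ):ℂ)) :=
      Complex.measurable_exp.comp ((Complex.measurable_ofReal.comp hσ_meas).const_mul _)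
    have mswap : Measurable fun p : E × E => σ p.2 p.1 := hσ_meas.comp measurable_swap
    have me2 : Measurable fun p : E × E =>
        Complex.exp (-(Complex.I/2) * (hb:ℂ) * ((σ p.2 p.1 : ℝ):ℂ)) :=
      Complex.measurable_exp.comp ((Complex.measurable_ofReal.comp mswap).const_mul _)
    have mdμ : Measurable fun p : E × E => μ.density p.1 := μ.meas_density.comp measurable_fst
    have mdν : Measurable fun p : E × E => ν.density p.2 := ν.meas_density.comp measurable_snd
    have mcind2 : Measurable fun p : E × E => cind Λ (p.2 + p.1) :=
      (measurable_const.indicator hΛ).comp (measurable_snd.add measurable_fst)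
    have hGm : Measurable G := ((me1.mul (mcind Λ hΛ)).mul mdν).mul mdμ
    have hHm : Measurable H := ((me2.mul mcind2).mul mdμ).mul mdν
    have hPm : Measurable P :=
      (((Complex.measurable_ofReal.comp hσ_meas).mul (mcind Λ hΛ)).mul mdν).mul mdμ
    have hGint : Integrable G ρ := by
      refine (integrable_const (1:ℝ)).mono' hGm.aestronglyMeasurable ?_
      filter_upwards with p
      simp only [hG, norm_mul, μ.norm_density, ν.norm_density, mul_one, norm_exp_I]
      simpa using norm_cind_le Λ (p.1 + p.2)
    have hHint : Integrable H ρ := by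
      refine (integrable_const (1:ℝ)).mono' hHm.aestronglyMeasurable ?_
      filter_upwards with p
      simp only [hH, norm_mul, μ.norm_density, ν.norm_density, mul_one, norm_exp_I]
      simpa using norm_cind_le Λ (p.2 + p.1)
    have hPint : Integrable P ρ := by
      refine (bnd_int.mono' hPm.aestronglyMeasurable ?_)
      filter_upwards with p
      simp only [hP, norm_mul, μ.norm_density, ν.norm_density, mul_one, Complex.norm_real,
        Real.norm_eq_abs]
      calc |σ p.1 p.2| * ‖cind Λ (p.1 + p.2)‖ ≤ (c * ς p.1 * ς p.2) * 1 :=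
            mul_le_mul (hdom p.1 p.2) (norm_cind_le _ _) (norm_nonneg _)
              (by positivity)
        _ ≤ 2 * c * (ς p.1 * ς p.2) := by
            have h1 : (0:ℝ) ≤ c * ς p.1 * ς p.2 := by positivity
            nlinarith
    have hTμν : twistVal (fun a b => σ a b) hb μ ν Λ = ∫ p, G p ∂ρ := by
      rw [hρ, MeasureTheory.integral_prod _ hGint]
      unfold twistVal CMeasure.integral
      congr 1
      funext f
      rw [← MeasureTheory.integral_mul_const]
    have hTνμ : twistVal (fun a b => σ a b) hb ν μ Λ = ∫ p, H p ∂ρ := by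
      rw [hρ, MeasureTheory.integral_prod_symm _ hHint]
      unfold twistVal CMeasure.integral
      congr 1
      funext g
      rw [← MeasureTheory.integral_mul_const]
    have hPb : pbVal (fun a b => σ a b) μ ν Λ = ∫ p, P p ∂ρ := by
      rw [hρ, MeasureTheory.integral_prod _ hPint]
      unfold pbVal CMeasure.integral
      congr 1
      funext f
      rw [← MeasureTheory.integral_mul_const]
    have hGH : Integrable (fun a : E × E => G a - H a) ρ := hGint.sub hHint
    rw [hTμν, hTνμ, hPb, ← MeasureTheory.integral_sub hGint hHint,
      ← MeasureTheory.integral_const_mul, ← MeasureTheory.integral_sub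
        (hGH.const_mul (Complex.I / (hb:ℂ))) hPint]
    refine integral_congr_ae (Eventually.of_forall fun p => ?_)
    simp only [hG, hH, hP]
    rw [hσ_anti p.2 p.1, show p.2 + p.1 = p.1 + p.2 from add_comm _ _]
    have hid := pt_id hb hhb (σ p.1 p.2)
    push_cast at hid ⊢
    linear_combination (cind Λ (p.1 + p.2) * ν.density p.2 * μ.density p.1) * hid
  -- integrability of the dominating integrands
  have qint : ∀ (hb : ℝ) (Λ : Set E), MeasurableSet Λ →
      Integrable (fun p : E × E =>
        |kk hb (σ p.1 p.2)| * Set.indicator Λ (fun _ => (1:ℝ)) (p.1 + p.2)) ρ := by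
    intro hb Λ hΛ
    refine bnd_int.mono' ((kk_m hb).abs.mul (mind Λ hΛ)).aestronglyMeasurable ?_
    filter_upwards with p
    have h1 : Set.indicator Λ (fun _ => (1:ℝ)) (p.1 + p.2) ≤ 1 := by
      by_cases h : p.1 + p.2 ∈ Λ <;> simp [h]
    have h2 : (0:ℝ) ≤ Set.indicator Λ (fun _ => (1:ℝ)) (p.1 + p.2) := by
      by_cases h : p.1 + p.2 ∈ Λ <;> simp [h]
    rw [Real.norm_eq_abs, abs_mul, _root_.abs_abs, _root_.abs_of_nonneg h2]
    calc |kk hb (σ p.1 p.2)| * Set.indicator Λ (fun _ => (1:ℝ)) (p.1 + p.2)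
        ≤ |kk hb (σ p.1 p.2)| * 1 := by
          exact mul_le_mul_of_nonneg_left h1 (abs_nonneg _)
      _ = |kk hb (σ p.1 p.2)| := mul_one _
      _ ≤ 2 * c * (ς p.1 * ς p.2) := kk_bd hb p
  -- bound each partial sum by D hb
  have tv_le : ∀ (hb : ℝ), hb ≠ 0 → ∀ r ∈ tvSet (fun Λ : Set E =>
      (Complex.I / (hb:ℂ)) * (twistVal (fun a b => σ a b) hb μ ν Λ
        - twistVal (fun a b => σ a b) hb ν μ Λ) - pbVal (fun a b => σ a b) μ ν Λ),
      r ≤ ∫ p, |kk hb (σ p.1 p.2)| ∂ρ := by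
    intro hb hhb r hr
    obtain ⟨n, Λ, hmeas, hdisj, rfl⟩ := hr
    have hterm : ∀ i : Fin n, ‖(Complex.I / (hb:ℂ)) * (twistVal (fun a b => σ a b) hb μ ν (Λ i)
        - twistVal (fun a b => σ a b) hb ν μ (Λ i)) - pbVal (fun a b => σ a b) μ ν (Λ i)‖
        ≤ ∫ p, |kk hb (σ p.1 p.2)| * Set.indicator (Λ i) (fun _ => (1:ℝ)) (p.1 + p.2) ∂ρ := by
      intro i
      rw [keyA hb hhb (Λ i) (hmeas i)]
      refine (norm_integral_le_integral_norm _).trans_eq ?_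
      refine integral_congr_ae (Eventually.of_forall fun p => ?_)
      beta_reduce
      rw [norm_mul, norm_mul, norm_mul, μ.norm_density, ν.norm_density, mul_one, mul_one,
        norm_cind, Complex.norm_real, Real.norm_eq_abs]
    calc ∑ i, ‖(Complex.I / (hb:ℂ)) * (twistVal (fun a b => σ a b) hb μ ν (Λ i)
          - twistVal (fun a b => σ a b) hb ν μ (Λ i)) - pbVal (fun a b => σ a b) μ ν (Λ i)‖
        ≤ ∑ i, ∫ p, |kk hb (σ p.1 p.2)| * Set.indicator (Λ i) (fun _ => (1:ℝ)) (p.1 + p.2) ∂ρ :=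
          Finset.sum_le_sum fun i _ => hterm i
      _ = ∫ p, ∑ i, |kk hb (σ p.1 p.2)| * Set.indicator (Λ i) (fun _ => (1:ℝ)) (p.1 + p.2) ∂ρ :=
          (MeasureTheory.integral_finset_sum _ fun i _ => qint hb (Λ i) (hmeas i)).symm
      _ ≤ ∫ p, |kk hb (σ p.1 p.2)| ∂ρ := by
          refine integral_mono (integrable_finset_sum _ fun i _ => qint hb (Λ i) (hmeas i))
            (kk_int hb) fun p => ?_
          rw [← Finset.mul_sum]
          exact mul_le_of_le_one_right (abs_nonneg _) (sum_ind_le Λ hdisj _)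
  -- the dominating integral tends to zero
  have hD : Tendsto (fun hb : ℝ => ∫ p, |kk hb (σ p.1 p.2)| ∂ρ)
      (nhdsWithin 0 {(0:ℝ)}ᶜ) (nhds 0) := by
    have := MeasureTheory.tendsto_integral_filter_of_dominated_convergence
      (μ := ρ) (F := fun (hb : ℝ) (p : E × E) => |kk hb (σ p.1 p.2)|)
      (f := fun _ => (0:ℝ)) (l := nhdsWithin 0 {(0:ℝ)}ᶜ)
      (bound := fun p => 2 * c * (ς p.1 * ς p.2))
      (Eventually.of_forall fun hb => ((kk_m hb).abs).aestronglyMeasurable)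
      (Eventually.of_forall fun hb => ae_of_all _ fun p => by
        simpa [_root_.abs_abs] using kk_bd hb p)
      bnd_int
      (ae_of_all _ fun p => by simpa using (kk_tendsto (σ p.1 p.2)).abs)
    simpa using this
  -- squeeze
  refine squeeze_zero' ?_ ?_ hD
  · filter_upwards [self_mem_nhdsWithin] with hb hhb
    simp only [Set.mem_compl_iff, Set.mem_singleton_iff] at hhb
    have hmem : (0:ℝ) ∈ tvSet (fun Λ : Set E =>
        (Complex.I / (hb:ℂ)) * (twistVal (fun a b => σ a b) hb μ ν Λ
          - twistVal (fun a b => σ a b) hb ν μ Λ) - pbVal (fun a b => σ a b) μ ν Λ) :=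
      ⟨0, Fin.elim0, fun i => i.elim0, fun i => i.elim0, by simp⟩
    exact le_csSup ⟨_, fun r hr => tv_le hb hhb r hr⟩ hmem
  · filter_upwards [self_mem_nhdsWithin] with hb hhb
    simp only [Set.mem_compl_iff, Set.mem_singleton_iff] at hhb
    have hmem : (0:ℝ) ∈ tvSet (fun Λ : Set E =>
        (Complex.I / (hb:ℂ)) * (twistVal (fun a b => σ a b) hb μ ν Λ
          - twistVal (fun a b => σ a b) hb ν μ Λ) - pbVal (fun a b => σ a b) μ ν Λ) :=
      ⟨0, Fin.elim0, fun i => i.elim0, fun i => i.elim0, by simp⟩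
    exact csSup_le ⟨0, hmem⟩ fun r hr => tv_le hb hhb r hr
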